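/- arXiv:1906.09211 — 4 statements merged into one kernel-verified Lean document; each statement's English description precedes it below -/
import Mathlib

section
/- Suppose the system x_{t+1} = f(x_t, u_t) is uniformly asymptotically incrementally stable on a positively invariant set X with class-KL function β, i.e., ‖φ^u_{s,t}(ξ) − φ^u_{s,t}(ξ')‖ ≤ β(‖ξ − ξ'‖, t − s) for all inputs u in M, ξ, ξ' ∈ X, and 0 ≤ s ≤ t. Then for any two input sequences u, ũ in M, any ξ ∈ X, and any t ∈ ℕ: ‖φ^u_{0,t}(ξ) − φ^{ũ}_{0,t}(ξ)‖ ≤ Σ_{s=0}^{t−1} β(‖f(x̃_s, u_s) − f(x̃_s, ũ_s)‖, t − s − 1), where x̃_s = φ^{ũ}_{0,s}(ξ). -/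
open scoped BigOperators

/-- The state at time `s + k` of the system `x_{t+1} = f(x_t, u_t)` started from `ξ` at time `s`.
Thus `φ^u_{s,t}(ξ) = phi f u s ξ (t - s)` for `s ≤ t`. -/
def phi {α : Type*} (f : α → ℝ → α) (u : ℕ → ℝ) (s : ℕ) (ξ : α) : ℕ → α
  | 0 => ξ
  | k + 1 => f (phi f u s ξ k) (u (s + k))

lemma phi_shift {α : Type*} (f : α → ℝ → α) (u : ℕ → ℝ) (s : ℕ) (ξ : α) :
    ∀ k, phi f u s ξ (k + 1) = phi f u (s + 1) (f ξ (u s)) k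
  | 0 => rfl
  | k + 1 => by
    show f (phi f u s ξ (k + 1)) (u (s + (k + 1))) =
      f (phi f u (s + 1) (f ξ (u s)) k) (u (s + 1 + k))
    rw [phi_shift f u s ξ k, Nat.add_comm k 1, ← Nat.add_assoc]

/-- If the system is uniformly asymptotically incrementally stable on a positively
invariant set `X` with class-KL function `β`, then the trajectories from the same initial
condition `ξ ∈ X` under two inputs `u, v ∈ M` satisfy the error estimate
`‖φ^u_{0,t}(ξ) − φ^{v}_{0,t}(ξ)‖ ≤ Σ_{s=0}^{t−1} β(‖f(x̃_s,u_s) − f(x̃_s,v_s)‖, t−s−1)`. -/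
theorem incremental_stability_error_estimate {n : ℕ}
    (f : EuclideanSpace ℝ (Fin n) → ℝ → EuclideanSpace ℝ (Fin n))
    (M : Set (ℕ → ℝ)) (X : Set (EuclideanSpace ℝ (Fin n)))
    (β : ℝ → ℕ → ℝ)
    -- class-KL-type properties of β (discrete time)
    (hβ_nonneg : ∀ c k, 0 ≤ c → 0 ≤ β c k)
    (hβ_zero : ∀ k, β 0 k = 0)
    (hβ_mono : ∀ k, StrictMonoOn (fun c => β c k) (Set.Ici (0 : ℝ)))
    (hβ_anti : ∀ c, 0 ≤ c → Antitone (fun k => β c k))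
    (hβ_lim : ∀ c, 0 ≤ c → Filter.Tendsto (fun k => β c k) Filter.atTop (nhds 0))
    -- X is positively invariant for inputs in M
    (hInv : ∀ u ∈ M, ∀ ξ ∈ X, ∀ s k, phi f u s ξ k ∈ X)
    -- uniform asymptotic incremental stability
    (hUAIS : ∀ u ∈ M, ∀ ξ ∈ X, ∀ ξ' ∈ X, ∀ s k,
      ‖phi f u s ξ k - phi f u s ξ' k‖ ≤ β (‖ξ - ξ'‖) k) :
    ∀ u ∈ M, ∀ v ∈ M, ∀ ξ ∈ X, ∀ t : ℕ,
      ‖phi f u 0 ξ t - phi f v 0 ξ t‖ ≤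
        ∑ s ∈ Finset.range t,
          β (‖f (phi f v 0 ξ s) (u s) - f (phi f v 0 ξ s) (v s)‖) (t - s - 1) := by
  intro u hu v hv ξ hξ t
  set z : ℕ → EuclideanSpace ℝ (Fin n) := fun s => phi f u s (phi f v 0 ξ s) (t - s) with hz
  have hz0 : z 0 = phi f u 0 ξ t := by simp [hz, phi]
  have hzt : z t = phi f v 0 ξ t := by simp [hz, phi]
  have htel : z 0 - z t = ∑ s ∈ Finset.range t, (z s - z (s + 1)) := by
    rw [Finset.sum_range_sub']
  calc ‖phi f u 0 ξ t - phi f v 0 ξ t‖ = ‖∑ s ∈ Finset.range t, (z s - z (s + 1))‖ := by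
        rw [← htel, hz0, hzt]
    _ ≤ ∑ s ∈ Finset.range t, ‖z s - z (s + 1)‖ := norm_sum_le _ _
    _ ≤ _ := by
        apply Finset.sum_le_sum
        intro s hs
        rw [Finset.mem_range] at hs
        have hxs : phi f v 0 ξ s ∈ X := hInv v hv ξ hξ 0 s
        have h1 : f (phi f v 0 ξ s) (u s) ∈ X := by
          have := hInv u hu _ hxs s 1
          simpa [phi] using this
        have h2 : f (phi f v 0 ξ s) (v s) ∈ X := by
          have := hInv v hv _ hxs s 1
          simpa [phi] using this
        have hzs : z s = phi f u (s + 1) (f (phi f v 0 ξ s) (u s)) (t - s - 1) := by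
          have hts : t - s = (t - s - 1) + 1 := by omega
          rw [hz]
          simp only
          conv_lhs => rw [hts]
          rw [phi_shift]
        have hzs1 : z (s + 1) = phi f u (s + 1) (f (phi f v 0 ξ s) (v s)) (t - s - 1) := by
          have hts : t - (s + 1) = t - s - 1 := by omega
          rw [hz]
          simp only [hts]
          congr 1
          show phi f v 0 ξ (s + 1) = _
          simp [phi]
        rw [hzs, hzs1]
        exact hUAIS u hu _ h1 _ h2 (s + 1) (t - s - 1)
end

section
/- Let f : ℝ^n × ℝ → ℝ^n with f(x,u) differentiable in x on a convex set X, and suppose there is a symmetric positive definite matrix P and μ ∈ (0,1) such that (∂f/∂x)(x,u)ᵀ P (∂f/∂x)(x,u) ⪯ μ P for all x ∈ X, u ∈ U. Then for all ξ, ξ' ∈ X and u ∈ U: (f(ξ,u) − f(ξ',u))ᵀ P (f(ξ,u) − f(ξ',u)) ≤ μ (ξ − ξ')ᵀ P (ξ − ξ'). -/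
open Matrix

/-- The quadratic form `x ↦ xᵀ P x` on Euclidean space. -/
noncomputable def quadP {n : ℕ} (P : Matrix (Fin n) (Fin n) ℝ)
    (x : EuclideanSpace ℝ (Fin n)) : ℝ :=
  (WithLp.equiv 2 (Fin n → ℝ) x) ⬝ᵥ P.mulVec (WithLp.equiv 2 (Fin n → ℝ) x)

lemma quadP_eq_norm_sq {n : ℕ} (S : Matrix (Fin n) (Fin n) ℝ) (hS : Sᵀ = S)
    (v : EuclideanSpace ℝ (Fin n)) :
    quadP (S * S) v = ‖Matrix.toEuclideanCLM (𝕜 := ℝ) S v‖ ^ 2 := by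
  rw [← real_inner_self_eq_norm_sq, quadP]
  rw [EuclideanSpace.inner_eq_star_dotProduct]
  rw [ofLp_toEuclideanCLM, ← WithLp.equiv_apply]
  set w : Fin n → ℝ := WithLp.equiv 2 (Fin n → ℝ) v
  have h2 : (S *ᵥ w) ⬝ᵥ star (S *ᵥ w) = (S *ᵥ w) ⬝ᵥ (S *ᵥ w) := by
    simp [star]
  rw [h2, Matrix.dotProduct_mulVec, ← Matrix.mulVec_transpose, Matrix.transpose_mul, hS,
    ← Matrix.mulVec_mulVec, dotProduct_comm, Matrix.dotProduct_mulVec,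
    ← Matrix.mulVec_transpose, hS]

open scoped MatrixOrder in
lemma exists_symm_sqrt_aux {n : ℕ} {P : Matrix (Fin n) (Fin n) ℝ} (hP : P.PosDef) :
    ∃ S : Matrix (Fin n) (Fin n) ℝ, Sᵀ = S ∧ S * S = P := by
  refine ⟨CFC.sqrt P, ?_, CFC.sqrt_mul_sqrt_self P hP.posSemidef.nonneg⟩
  have := (CFC.sqrt_nonneg P).posSemidef.1
  rwa [Matrix.IsHermitian, Matrix.conjTranspose_eq_transpose_of_trivial] at this

/-- If the Jacobian `J(x,u) = ∂f/∂x (x,u)` satisfies the Loewner inequality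
`J(x,u)ᵀ P J(x,u) ⪯ μ P` on a convex set `X` for all `u ∈ U`, then
`(f(ξ,u) − f(ξ',u))ᵀ P (f(ξ,u) − f(ξ',u)) ≤ μ (ξ − ξ')ᵀ P (ξ − ξ')` for `ξ, ξ' ∈ X`, `u ∈ U`. -/
theorem demidovich_one_step {n : ℕ}
    (f : EuclideanSpace ℝ (Fin n) → ℝ → EuclideanSpace ℝ (Fin n))
    (X : Set (EuclideanSpace ℝ (Fin n))) (U : Set ℝ)
    (hX : Convex ℝ X)
    (J : EuclideanSpace ℝ (Fin n) → ℝ → Matrix (Fin n) (Fin n) ℝ)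
    (P : Matrix (Fin n) (Fin n) ℝ) (hP : P.PosDef)
    (μ : ℝ) (hμ : μ ∈ Set.Ioo (0 : ℝ) 1)
    -- `f(·,u)` is differentiable in `x` on `X` with Jacobian `J(x,u)`
    (hder : ∀ x ∈ X, ∀ u ∈ U,
      HasFDerivAt (fun y => f y u) (Matrix.toEuclideanCLM (𝕜 := ℝ) (J x u)) x)
    -- Loewner inequality `J(x,u)ᵀ P J(x,u) ⪯ μ P`
    (hLoewner : ∀ x ∈ X, ∀ u ∈ U, (μ • P - (J x u)ᵀ * P * (J x u)).PosSemidef) :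
    ∀ ξ ∈ X, ∀ ξ' ∈ X, ∀ u ∈ U,
      quadP P (f ξ u - f ξ' u) ≤ μ * quadP P (ξ - ξ') := by
  intro ξ hξ ξ' hξ' u hu
  obtain ⟨S, hSsymm, hSS⟩ := exists_symm_sqrt_aux hP
  -- invertibility of S
  have hdet : IsUnit S.det := by
    have h1 : S.det * S.det = P.det := by rw [← Matrix.det_mul, hSS]
    have h2 : 0 < P.det := hP.det_pos
    refine isUnit_iff_ne_zero.mpr fun h => ?_
    rw [h, mul_zero] at h1; linarith
  have hinv1 : S * S⁻¹ = 1 := Matrix.mul_nonsing_inv S hdet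
  have hinv2 : S⁻¹ * S = 1 := Matrix.nonsing_inv_mul S hdet
  set T := Matrix.toEuclideanCLM (𝕜 := ℝ) (n := Fin n)
  have hTmul : ∀ A B : Matrix (Fin n) (Fin n) ℝ, ∀ v, T (A * B) v = T A (T B v) := by
    intro A B v; rw [_root_.map_mul]; rfl
  have hTSinvS : ∀ v, T S⁻¹ (T S v) = v := by
    intro v; rw [← hTmul, hinv2, _root_.map_one]; rfl
  have hTSSinv : ∀ v, T S (T S⁻¹ v) = v := by
    intro v; rw [← hTmul, hinv1, _root_.map_one]; rfl
  -- quadP as squared norm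
  have hquad : ∀ v, quadP P v = ‖T S v‖ ^ 2 := by
    intro v; rw [← hSS]; exact quadP_eq_norm_sq S hSsymm v
  -- the key norm bound on the conjugated Jacobian
  have hμ0 : 0 < μ := hμ.1
  have hbound : ∀ x ∈ X, ‖T S ∘L T (J x u) ∘L T S⁻¹‖ ≤ Real.sqrt μ := by
    intro x hx
    refine ContinuousLinearMap.opNorm_le_bound _ (Real.sqrt_nonneg μ) fun v => ?_
    have hkey : ‖T S (T (J x u) (T S⁻¹ v))‖ ^ 2 ≤ μ * ‖v‖ ^ 2 := by
      set w := T S⁻¹ v with hw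
      have h1 : ‖T S (T (J x u) w)‖ ^ 2 = quadP P (T (J x u) w) := (hquad _).symm
      have h2 : μ * ‖v‖ ^ 2 = μ * quadP P w := by rw [hquad w, hTSSinv]
      rw [h1, h2]
      -- quadP P (J w) ≤ μ quadP P w from Loewner
      have hL := (hLoewner x hx u hu).dotProduct_mulVec_nonneg (WithLp.equiv 2 (Fin n → ℝ) w)
      set w' : Fin n → ℝ := WithLp.equiv 2 (Fin n → ℝ) w
      have hstar : star w' = w' := by simp [star]
      rw [hstar, Matrix.sub_mulVec, dotProduct_sub, sub_nonneg] at hL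
      have hPt : Pᵀ = P := by
        have := hP.1
        rwa [Matrix.IsHermitian, Matrix.conjTranspose_eq_transpose_of_trivial] at this
      have hq1 : quadP P (T (J x u) w) = w' ⬝ᵥ ((J x u)ᵀ * P * (J x u)) *ᵥ w' := by
        rw [quadP, WithLp.equiv_apply, ofLp_toEuclideanCLM, ← WithLp.equiv_apply]
        have hJw : (J x u) *ᵥ (WithLp.equiv 2 (Fin n → ℝ) w) = (J x u) *ᵥ w' :=
          rfl
        rw [hJw, ← Matrix.mulVec_mulVec, ← Matrix.mulVec_mulVec, Matrix.dotProduct_mulVec,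
          ← Matrix.mulVec_transpose, hPt, Matrix.dotProduct_mulVec w',
          ← Matrix.mulVec_transpose, Matrix.transpose_transpose, dotProduct_comm]
      have hq2 : w' ⬝ᵥ (μ • P) *ᵥ w' = μ * quadP P w := by
        rw [quadP, Matrix.smul_mulVec, dotProduct_smul, smul_eq_mul]
      rw [hq1]
      calc w' ⬝ᵥ ((J x u)ᵀ * P * (J x u)) *ᵥ w' ≤ w' ⬝ᵥ (μ • P) *ᵥ w' := hL
        _ = μ * quadP P w := hq2
    have h3 : ‖(T S ∘L T (J x u) ∘L T S⁻¹) v‖ = ‖T S (T (J x u) (T S⁻¹ v))‖ := rfl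
    rw [h3]
    have h4 : (0:ℝ) ≤ ‖T S (T (J x u) (T S⁻¹ v))‖ := norm_nonneg _
    nlinarith [Real.sq_sqrt hμ0.le, Real.sqrt_nonneg μ, norm_nonneg v,
      mul_le_mul_of_nonneg_left (norm_nonneg v) (Real.sqrt_nonneg μ)]
  -- apply the mean value inequality on Y = T S '' X
  set Y := (T S) '' X with hY
  have hYconv : Convex ℝ Y := by simpa using hX.linear_image (T S).toLinearMap
  set g : EuclideanSpace ℝ (Fin n) → EuclideanSpace ℝ (Fin n) :=
    fun y => T S (f (T S⁻¹ y) u) with hg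
  have hgder : ∀ y ∈ Y, HasFDerivWithinAt g
      (T S ∘L T (J (T S⁻¹ y) u) ∘L T S⁻¹) Y y := by
    rintro y ⟨x, hx, rfl⟩
    have hxy : T S⁻¹ (T S x) = x := hTSinvS x
    have hd1 : HasFDerivAt (fun z => T S⁻¹ z) (T S⁻¹) (T S x) := (T S⁻¹).hasFDerivAt
    have hd2 : HasFDerivAt (fun z => f z u) (T (J x u)) (T S⁻¹ (T S x)) := by
      rw [hxy]; exact hder x hx u hu
    have hd2' : HasFDerivAt (fun z => f (T S⁻¹ z) u) (T (J x u) ∘L T S⁻¹) (T S x) :=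
      hd2.comp (T S x) hd1
    have hd3 : HasFDerivAt g (T S ∘L (T (J x u) ∘L T S⁻¹)) (T S x) :=
      ((T S).hasFDerivAt.comp _ hd2')
    rw [hxy]
    exact hd3.hasFDerivWithinAt
  have hb : ∀ y ∈ Y, ‖T S ∘L T (J (T S⁻¹ y) u) ∘L T S⁻¹‖ ≤ Real.sqrt μ := by
    rintro y ⟨x, hx, rfl⟩; rw [hTSinvS]; exact hbound x hx
  have hmv := hYconv.norm_image_sub_le_of_norm_hasFDerivWithin_le hgder hb
    (Set.mem_image_of_mem _ hξ') (Set.mem_image_of_mem _ hξ)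
  have hgξ : g (T S ξ) = T S (f ξ u) := by rw [hg]; simp only; rw [hTSinvS]
  have hgξ' : g (T S ξ') = T S (f ξ' u) := by rw [hg]; simp only; rw [hTSinvS]
  rw [hgξ, hgξ', ← map_sub, ← map_sub] at hmv
  rw [hquad, hquad]
  have h1 : ‖T S (f ξ u - f ξ' u)‖ ≤ Real.sqrt μ * ‖T S (ξ - ξ')‖ := hmv
  nlinarith [Real.sq_sqrt hμ0.le, norm_nonneg (T S (f ξ u - f ξ' u)),
    norm_nonneg (T S (ξ - ξ')), Real.sqrt_nonneg μ]
end

section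
/- Under the discrete-time Demidovich criterion — there exist symmetric positive definite P and μ ∈ (0,1) with (∂f/∂x)(x,u)ᵀ P (∂f/∂x)(x,u) ⪯ μ P for all x in a convex positively invariant set X and u ∈ U — the system x_{t+1} = f(x_t, u_t) is uniformly exponentially incrementally stable with β(C, t) = √κ(P) · C · μ^{t/2}: ‖φ^u_{s,t}(ξ) − φ^u_{s,t}(ξ')‖ ≤ √κ(P) ‖ξ − ξ'‖ μ^{(t−s)/2} for all inputs u valued in U, ξ, ξ' ∈ X, 0 ≤ s ≤ t. -/
open Matrix

section aux
variable {n : ℕ}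

lemma inner_toEuclideanCLM_eq (A : Matrix (Fin n) (Fin n) ℝ) (v : EuclideanSpace ℝ (Fin n)) :
    (inner ℝ v (Matrix.toEuclideanCLM (𝕜 := ℝ) A v) : ℝ) =
      star (WithLp.equiv 2 (Fin n → ℝ) v) ⬝ᵥ (A *ᵥ (WithLp.equiv 2 (Fin n → ℝ) v)) := by
  rw [EuclideanSpace.inner_eq_star_dotProduct, dotProduct_comm]; rfl

lemma posSemidef_inner_nonneg {A : Matrix (Fin n) (Fin n) ℝ} (hA : A.PosSemidef)
    (v : EuclideanSpace ℝ (Fin n)) :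
    0 ≤ (inner ℝ v (Matrix.toEuclideanCLM (𝕜 := ℝ) A v) : ℝ) := by
  rw [inner_toEuclideanCLM_eq]; exact hA.dotProduct_mulVec_nonneg _

lemma hermitian_inner_left_right {A : Matrix (Fin n) (Fin n) ℝ} (hA : A.IsHermitian)
    (x y : EuclideanSpace ℝ (Fin n)) :
    (inner ℝ (Matrix.toEuclideanCLM (𝕜 := ℝ) A x) y : ℝ) =
      inner ℝ x (Matrix.toEuclideanCLM (𝕜 := ℝ) A y) := by
  have hst : star (Matrix.toEuclideanCLM (𝕜 := ℝ) A) = Matrix.toEuclideanCLM (𝕜 := ℝ) A := by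
    rw [← map_star]; exact congrArg _ hA
  rw [ContinuousLinearMap.star_eq_adjoint] at hst
  conv_lhs => rw [← hst]
  exact ContinuousLinearMap.adjoint_inner_left _ _ _

lemma clm_apply_eigenvectorBasis {A : Matrix (Fin n) (Fin n) ℝ} (hA : A.IsHermitian) (i : Fin n) :
    Matrix.toEuclideanCLM (𝕜 := ℝ) A (hA.eigenvectorBasis i) =
      hA.eigenvalues i • hA.eigenvectorBasis i := by
  apply (WithLp.equiv 2 (Fin n → ℝ)).injective
  show WithLp.ofLp (Matrix.toEuclideanCLM (𝕜 := ℝ) A (hA.eigenvectorBasis i)) =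
    WithLp.ofLp (hA.eigenvalues i • hA.eigenvectorBasis i)
  rw [Matrix.ofLp_toEuclideanCLM]
  simpa using hA.mulVec_eigenvectorBasis i

lemma inner_quad_expand {A : Matrix (Fin n) (Fin n) ℝ} (hA : A.IsHermitian)
    (v : EuclideanSpace ℝ (Fin n)) :
    (inner ℝ v (Matrix.toEuclideanCLM (𝕜 := ℝ) A v) : ℝ) =
      ∑ i, hA.eigenvalues i * (inner ℝ (hA.eigenvectorBasis i) v : ℝ) ^ 2 := by
  rw [← hA.eigenvectorBasis.sum_inner_mul_inner v (Matrix.toEuclideanCLM (𝕜 := ℝ) A v)]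
  refine Finset.sum_congr rfl fun i _ => ?_
  have h1 : (inner ℝ (hA.eigenvectorBasis i) (Matrix.toEuclideanCLM (𝕜 := ℝ) A v) : ℝ)
      = hA.eigenvalues i * inner ℝ (hA.eigenvectorBasis i) v := by
    rw [← hermitian_inner_left_right hA, clm_apply_eigenvectorBasis hA,
      real_inner_smul_left]
  rw [h1, real_inner_comm v (hA.eigenvectorBasis i)]
  ring

lemma norm_sq_expand {A : Matrix (Fin n) (Fin n) ℝ} (hA : A.IsHermitian)
    (v : EuclideanSpace ℝ (Fin n)) :
    ‖v‖ ^ 2 = ∑ i, (inner ℝ (hA.eigenvectorBasis i) v : ℝ) ^ 2 := by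
  rw [← real_inner_self_eq_norm_sq, ← hA.eigenvectorBasis.sum_inner_mul_inner v v]
  refine Finset.sum_congr rfl fun i _ => ?_
  rw [real_inner_comm v (hA.eigenvectorBasis i)]; ring

lemma quad_le_iSup {P : Matrix (Fin n) (Fin n) ℝ} (hP : P.PosDef)
    (v : EuclideanSpace ℝ (Fin n)) :
    (inner ℝ v (Matrix.toEuclideanCLM (𝕜 := ℝ) P v) : ℝ) ≤ (⨆ i, hP.1.eigenvalues i) * ‖v‖ ^ 2 := by
  rw [inner_quad_expand hP.1, norm_sq_expand hP.1, Finset.mul_sum]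
  refine Finset.sum_le_sum fun i _ => ?_
  exact mul_le_mul_of_nonneg_right (le_ciSup (Set.Finite.bddAbove (Set.finite_range _)) i)
    (sq_nonneg _)

lemma iInf_le_quad {P : Matrix (Fin n) (Fin n) ℝ} (hP : P.PosDef)
    (v : EuclideanSpace ℝ (Fin n)) :
    (⨅ i, hP.1.eigenvalues i) * ‖v‖ ^ 2 ≤ (inner ℝ v (Matrix.toEuclideanCLM (𝕜 := ℝ) P v) : ℝ) := by
  rw [inner_quad_expand hP.1, norm_sq_expand hP.1, Finset.mul_sum]
  refine Finset.sum_le_sum fun i _ => ?_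
  exact mul_le_mul_of_nonneg_right (ciInf_le (Set.Finite.bddBelow (Set.finite_range _)) i)
    (sq_nonneg _)

end aux

/-- Discrete-time Demidovich criterion implies uniform exponential incremental stability:
`‖φ^u_{s,t}(ξ) − φ^u_{s,t}(ξ')‖ ≤ √κ(P) ‖ξ − ξ'‖ μ^{(t−s)/2}` for inputs valued in `U`,
`ξ, ξ' ∈ X`, `0 ≤ s ≤ t`, where `κ(P) = λ_max(P)/λ_min(P)`. -/
theorem demidovich_exponential_incremental_stability {n : ℕ}
    (f : EuclideanSpace ℝ (Fin n) → ℝ → EuclideanSpace ℝ (Fin n))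
    (X : Set (EuclideanSpace ℝ (Fin n))) (U : Set ℝ)
    (hX : Convex ℝ X)
    -- `X` is positively invariant for inputs valued in `U`
    (hInv : ∀ x ∈ X, ∀ u ∈ U, f x u ∈ X)
    (J : EuclideanSpace ℝ (Fin n) → ℝ → Matrix (Fin n) (Fin n) ℝ)
    (P : Matrix (Fin n) (Fin n) ℝ) (hP : P.PosDef)
    (μ : ℝ) (hμ : μ ∈ Set.Ioo (0 : ℝ) 1)
    -- `f(·,u)` is differentiable in `x` on `X` with Jacobian `J(x,u)`
    (hder : ∀ x ∈ X, ∀ u ∈ U,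
      HasFDerivAt (fun y => f y u) (Matrix.toEuclideanCLM (𝕜 := ℝ) (J x u)) x)
    -- Loewner inequality `J(x,u)ᵀ P J(x,u) ⪯ μ P`
    (hLoewner : ∀ x ∈ X, ∀ u ∈ U, (μ • P - (J x u)ᵀ * P * (J x u)).PosSemidef) :
    ∀ u : ℕ → ℝ, (∀ k, u k ∈ U) → ∀ ξ ∈ X, ∀ ξ' ∈ X, ∀ s t : ℕ, s ≤ t →
      ‖phi f u s ξ (t - s) - phi f u s ξ' (t - s)‖ ≤
        Real.sqrt ((⨆ i, hP.1.eigenvalues i) / (⨅ i, hP.1.eigenvalues i)) *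
          ‖ξ - ξ'‖ * Real.sqrt μ ^ (t - s) := by
  intro u hu ξ hξ ξ' hξ' s t hst
  set k := t - s with hk
  clear hst hk
  rcases Nat.eq_zero_or_pos n with hn | hn
  · subst hn
    have h0 : ξ - ξ' = (0 : EuclideanSpace ℝ (Fin 0)) := Subsingleton.elim _ _
    have h1 : phi f u s ξ k - phi f u s ξ' k = (0 : EuclideanSpace ℝ (Fin 0)) :=
      Subsingleton.elim _ _
    rw [h0, h1, norm_zero, mul_zero, zero_mul]
  haveI : NeZero n := ⟨hn.ne'⟩
  -- square root of P
  have hPS : P.PosSemidef := hP.posSemidef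
  set S : Matrix (Fin n) (Fin n) ℝ := by open scoped MatrixOrder in exact CFC.sqrt P with hSdef
  have hSps : S.PosSemidef := by open scoped MatrixOrder in exact (CFC.sqrt_nonneg P).posSemidef
  have hSS : S * S = P := by open scoped MatrixOrder in exact CFC.sqrt_mul_sqrt_self P hPS.nonneg
  have hdet : IsUnit S.det := by
    have hPdet : P.det ≠ 0 := ne_of_gt hP.det_pos
    have hd : S.det * S.det = P.det := by rw [← det_mul, hSS]
    refine isUnit_iff_ne_zero.mpr fun h => hPdet ?_
    rw [← hd, h, mul_zero]
  set M : EuclideanSpace ℝ (Fin n) →L[ℝ] EuclideanSpace ℝ (Fin n) :=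
    Matrix.toEuclideanCLM (𝕜 := ℝ) S with hMdef
  set Minv : EuclideanSpace ℝ (Fin n) →L[ℝ] EuclideanSpace ℝ (Fin n) :=
    Matrix.toEuclideanCLM (𝕜 := ℝ) S⁻¹ with hMinvdef
  have hMMinv : ∀ w, M (Minv w) = w := by
    intro w
    have h1 : M * Minv = 1 := by
      rw [hMdef, hMinvdef, ← _root_.map_mul, Matrix.mul_nonsing_inv _ hdet, _root_.map_one]
    calc M (Minv w) = (M * Minv) w := rfl
    _ = w := by rw [h1]; rfl
  have hMinvM : ∀ w, Minv (M w) = w := by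
    intro w
    have h1 : Minv * M = 1 := by
      rw [hMdef, hMinvdef, ← _root_.map_mul, Matrix.nonsing_inv_mul _ hdet, _root_.map_one]
    calc Minv (M w) = (Minv * M) w := rfl
    _ = w := by rw [h1]; rfl
  -- ‖M v‖² is the quadratic form of P
  have hMnorm : ∀ v, ‖M v‖ ^ 2 = (inner ℝ v (Matrix.toEuclideanCLM (𝕜 := ℝ) P v) : ℝ) := by
    intro v
    rw [← real_inner_self_eq_norm_sq, hMdef]
    rw [hermitian_inner_left_right hSps.1]
    rw [← ContinuousLinearMap.mul_apply, ← _root_.map_mul, hSS]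
  -- pointwise contraction in the M-norm
  have hcontr : ∀ x ∈ X, ∀ uu ∈ U, ∀ v,
      ‖M (Matrix.toEuclideanCLM (𝕜 := ℝ) (J x uu) v)‖ ≤ Real.sqrt μ * ‖M v‖ := by
    intro x hx uu huu v
    have hq : (inner ℝ (Matrix.toEuclideanCLM (𝕜 := ℝ) (J x uu) v)
          (Matrix.toEuclideanCLM (𝕜 := ℝ) P (Matrix.toEuclideanCLM (𝕜 := ℝ) (J x uu) v)) : ℝ)
        ≤ μ * inner ℝ v (Matrix.toEuclideanCLM (𝕜 := ℝ) P v) := by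
      have h0 := posSemidef_inner_nonneg (hLoewner x hx uu huu) v
      have hexp : (inner ℝ v (Matrix.toEuclideanCLM (𝕜 := ℝ)
            (μ • P - (J x uu)ᵀ * P * (J x uu)) v) : ℝ)
          = μ * inner ℝ v (Matrix.toEuclideanCLM (𝕜 := ℝ) P v)
            - inner ℝ (Matrix.toEuclideanCLM (𝕜 := ℝ) (J x uu) v)
              (Matrix.toEuclideanCLM (𝕜 := ℝ) P (Matrix.toEuclideanCLM (𝕜 := ℝ) (J x uu) v)) := by
        rw [map_sub, _root_.map_smul, ContinuousLinearMap.sub_apply,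
          ContinuousLinearMap.smul_apply, inner_sub_right, real_inner_smul_right]
        congr 1
        have htr : (J x uu)ᵀ = star (J x uu) := rfl
        rw [_root_.map_mul, _root_.map_mul, ContinuousLinearMap.mul_apply,
          ContinuousLinearMap.mul_apply, htr, map_star, ContinuousLinearMap.star_eq_adjoint,
          ContinuousLinearMap.adjoint_inner_right]
      rw [hexp] at h0
      linarith
    rw [← hMnorm, ← hMnorm] at hq
    have h1 : ‖M (Matrix.toEuclideanCLM (𝕜 := ℝ) (J x uu) v)‖
        = Real.sqrt (‖M (Matrix.toEuclideanCLM (𝕜 := ℝ) (J x uu) v)‖ ^ 2) := by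
      rw [Real.sqrt_sq (norm_nonneg _)]
    rw [h1]
    calc Real.sqrt (‖M (Matrix.toEuclideanCLM (𝕜 := ℝ) (J x uu) v)‖ ^ 2)
        ≤ Real.sqrt (μ * ‖M v‖ ^ 2) := Real.sqrt_le_sqrt hq
      _ = Real.sqrt μ * ‖M v‖ := by
          rw [Real.sqrt_mul hμ.1.le, Real.sqrt_sq (norm_nonneg _)]
  -- one-step contraction via the mean value inequality
  have hstep : ∀ uu ∈ U, ∀ x ∈ X, ∀ y ∈ X,
      ‖M (f x uu) - M (f y uu)‖ ≤ Real.sqrt μ * ‖M x - M y‖ := by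
    intro uu huu x hx y hy
    have hconv : Convex ℝ ((M : EuclideanSpace ℝ (Fin n) →ₗ[ℝ] EuclideanSpace ℝ (Fin n)) '' X) :=
      hX.linear_image _
    set s' := ((M : EuclideanSpace ℝ (Fin n) →ₗ[ℝ] EuclideanSpace ℝ (Fin n)) '' X) with hs'
    have hmem : ∀ z ∈ s', Minv z ∈ X := by
      rintro z ⟨w, hw, rfl⟩
      simpa [hMinvM w] using hw
    have hderiv : ∀ z ∈ s', HasFDerivWithinAt (fun w => M (f (Minv w) uu))
        (M ∘L Matrix.toEuclideanCLM (𝕜 := ℝ) (J (Minv z) uu) ∘L Minv) s' z := by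
      intro z hz
      have h1 : HasFDerivAt (fun w => f w uu)
          (Matrix.toEuclideanCLM (𝕜 := ℝ) (J (Minv z) uu)) (Minv z) :=
        hder _ (hmem z hz) uu huu
      have h2 : HasFDerivAt (fun w => f (Minv w) uu)
          (Matrix.toEuclideanCLM (𝕜 := ℝ) (J (Minv z) uu) ∘L Minv) z :=
        h1.comp z (Minv.hasFDerivAt)
      exact ((M.hasFDerivAt).comp z h2).hasFDerivWithinAt
    have hbound : ∀ z ∈ s',
        ‖M ∘L Matrix.toEuclideanCLM (𝕜 := ℝ) (J (Minv z) uu) ∘L Minv‖ ≤ Real.sqrt μ := by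
      intro z hz
      refine ContinuousLinearMap.opNorm_le_bound _ (Real.sqrt_nonneg _) fun w => ?_
      have hc := hcontr _ (hmem z hz) uu huu (Minv w)
      calc ‖(M ∘L Matrix.toEuclideanCLM (𝕜 := ℝ) (J (Minv z) uu) ∘L Minv) w‖
          = ‖M (Matrix.toEuclideanCLM (𝕜 := ℝ) (J (Minv z) uu) (Minv w))‖ := rfl
        _ ≤ Real.sqrt μ * ‖M (Minv w)‖ := hc
        _ = Real.sqrt μ * ‖w‖ := by rw [hMMinv w]
    have hxs : M x ∈ s' := ⟨x, hx, rfl⟩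
    have hys : M y ∈ s' := ⟨y, hy, rfl⟩
    have h := hconv.norm_image_sub_le_of_norm_hasFDerivWithin_le hderiv hbound hys hxs
    simpa [hMinvM] using h
  -- iterate along trajectories
  have hmemX : ∀ ζ, ζ ∈ X → ∀ m, phi f u s ζ m ∈ X := by
    intro ζ hζ m
    induction m with
    | zero => exact hζ
    | succ m ih => exact hInv _ ih _ (hu _)
  have hMiter : ∀ m, ‖M (phi f u s ξ m) - M (phi f u s ξ' m)‖
      ≤ Real.sqrt μ ^ m * ‖M ξ - M ξ'‖ := by
    intro m
    induction m with
    | zero => simp [phi]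
    | succ m ih =>
      calc ‖M (phi f u s ξ (m + 1)) - M (phi f u s ξ' (m + 1))‖
          = ‖M (f (phi f u s ξ m) (u (s + m))) - M (f (phi f u s ξ' m) (u (s + m)))‖ := rfl
        _ ≤ Real.sqrt μ * ‖M (phi f u s ξ m) - M (phi f u s ξ' m)‖ :=
            hstep _ (hu _) _ (hmemX ξ hξ m) _ (hmemX ξ' hξ' m)
        _ ≤ Real.sqrt μ * (Real.sqrt μ ^ m * ‖M ξ - M ξ'‖) :=
            mul_le_mul_of_nonneg_left ih (Real.sqrt_nonneg _)
        _ = Real.sqrt μ ^ (m + 1) * ‖M ξ - M ξ'‖ := by ring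
  -- eigenvalue bounds
  set a := ⨅ i, hP.1.eigenvalues i with hadef
  set b := ⨆ i, hP.1.eigenvalues i with hbdef
  have ha : 0 < a := by
    obtain ⟨i, hi⟩ := exists_eq_ciInf_of_finite (f := hP.1.eigenvalues)
    rw [hadef, ← hi]
    exact hP.eigenvalues_pos i
  have hlow : ∀ v : EuclideanSpace ℝ (Fin n), Real.sqrt a * ‖v‖ ≤ ‖M v‖ := by
    intro v
    have h1 : a * ‖v‖ ^ 2 ≤ ‖M v‖ ^ 2 := by rw [hMnorm]; exact iInf_le_quad hP v
    calc Real.sqrt a * ‖v‖ = Real.sqrt (a * ‖v‖ ^ 2) := by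
          rw [Real.sqrt_mul ha.le, Real.sqrt_sq (norm_nonneg _)]
      _ ≤ Real.sqrt (‖M v‖ ^ 2) := Real.sqrt_le_sqrt h1
      _ = ‖M v‖ := Real.sqrt_sq (norm_nonneg _)
  have hb0 : 0 ≤ b := by
    obtain ⟨i, hi⟩ := exists_eq_ciInf_of_finite (f := hP.1.eigenvalues)
    exact le_trans (hP.eigenvalues_pos i).le
      (le_ciSup (Set.Finite.bddAbove (Set.finite_range _)) i)
  have hup : ∀ v : EuclideanSpace ℝ (Fin n), ‖M v‖ ≤ Real.sqrt b * ‖v‖ := by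
    intro v
    have h1 : ‖M v‖ ^ 2 ≤ b * ‖v‖ ^ 2 := by rw [hMnorm]; exact quad_le_iSup hP v
    calc ‖M v‖ = Real.sqrt (‖M v‖ ^ 2) := (Real.sqrt_sq (norm_nonneg _)).symm
      _ ≤ Real.sqrt (b * ‖v‖ ^ 2) := Real.sqrt_le_sqrt h1
      _ = Real.sqrt b * ‖v‖ := by rw [Real.sqrt_mul hb0, Real.sqrt_sq (norm_nonneg _)]
  -- conclusion
  have h2 : Real.sqrt a * ‖phi f u s ξ k - phi f u s ξ' k‖
      ≤ Real.sqrt μ ^ k * (Real.sqrt b * ‖ξ - ξ'‖) := by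
    calc Real.sqrt a * ‖phi f u s ξ k - phi f u s ξ' k‖
        ≤ ‖M (phi f u s ξ k - phi f u s ξ' k)‖ := hlow _
      _ = ‖M (phi f u s ξ k) - M (phi f u s ξ' k)‖ := by rw [map_sub]
      _ ≤ Real.sqrt μ ^ k * ‖M ξ - M ξ'‖ := hMiter k
      _ = Real.sqrt μ ^ k * ‖M (ξ - ξ')‖ := by rw [map_sub]
      _ ≤ Real.sqrt μ ^ k * (Real.sqrt b * ‖ξ - ξ'‖) :=
          mul_le_mul_of_nonneg_left (hup _) (pow_nonneg (Real.sqrt_nonneg _) k)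
  rw [Real.sqrt_div hb0, div_mul_eq_mul_div, div_mul_eq_mul_div,
    le_div_iff₀ (Real.sqrt_pos.mpr ha)]
  calc ‖phi f u s ξ k - phi f u s ξ' k‖ * Real.sqrt a
      = Real.sqrt a * ‖phi f u s ξ k - phi f u s ξ' k‖ := mul_comm _ _
    _ ≤ Real.sqrt μ ^ k * (Real.sqrt b * ‖ξ - ξ'‖) := h2
    _ = Real.sqrt b * ‖ξ - ξ'‖ * Real.sqrt μ ^ k := by ring
end

section
/- Approximation decomposition: let F be a causal time-invariant i/o map with approximately finite memory on M(R), let ε > 0, γ ∈ (0,1), m = m*_F(γε), and suppose f̂ : ℝ^{m+1} → ℝ satisfies sup_{x ∈ [−R,R]^{m+1}} |F̃_m(x) − f̂(x)| < (1−γ)ε. Define (F̂u)_t = f̂(u_{t−m},…,u_t) (with u_s = 0 for s < 0). Then sup_{u ∈ M(R)} sup_{t ∈ ℕ} |(Fu)_t − (F̂u)_t| < ε. -/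
/-- The windowing operator `(W_{t,m} u)_τ = u_τ` if `max(t−m,0) ≤ τ ≤ t`, else `0`. -/
def window (t m : ℕ) (u : ℕ → ℝ) : ℕ → ℝ :=
  fun τ => if t - m ≤ τ ∧ τ ≤ t then u τ else 0

/-- The functional `F̃_t : ℝ^{t+1} → ℝ` induced by a causal i/o map `F`. -/
def tildeF (F : (ℕ → ℝ) → ℕ → ℝ) (t : ℕ) (x : Fin (t + 1) → ℝ) : ℝ :=
  F (fun s => if h : s < t + 1 then x ⟨s, h⟩ else 0) t

/-- Approximation decomposition: if `F` is causal and time-invariant, `m = m*_F(γε)`, and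
`f̂ : ℝ^{m+1} → ℝ` approximates `F̃_m` on `[−R,R]^{m+1}` within `(1−γ)ε`, then the TCN
`(F̂u)_t = f̂(u_{t−m},…,u_t)` (with `u_s = 0` for `s < 0`) approximates `F` within `ε`
uniformly over `M(R)` and all times. -/
theorem tcn_approximation_decomposition
    (F : (ℕ → ℝ) → ℕ → ℝ) (R ε γ : ℝ) (hR : 0 < R) (hε : 0 < ε)
    (hγ : γ ∈ Set.Ioo (0 : ℝ) 1) (m : ℕ)
    -- causality
    (hC : ∀ u v : ℕ → ℝ, ∀ t : ℕ, (∀ s ≤ t, u s = v s) → F u t = F v t)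
    -- time invariance (with respect to the right shift with zero padding)
    (hTI : ∀ k : ℕ, ∀ u : ℕ → ℝ, ∀ t : ℕ,
      F (fun τ => if k ≤ τ then u (τ - k) else 0) t = if k ≤ t then F u (t - k) else 0)
    -- m = m*_F(γε): approximately finite memory at level γε
    (hm : ∀ u : ℕ → ℝ, (∀ τ, |u τ| ≤ R) → ∀ t : ℕ,
      |F u t - F (window t m u) t| ≤ γ * ε)
    (fhat : (Fin (m + 1) → ℝ) → ℝ)
    -- f̂ approximates F̃_m on the cube within (1−γ)ε
    (hfhat : ∀ x : Fin (m + 1) → ℝ, (∀ i, |x i| ≤ R) →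
      |tildeF F m x - fhat x| < (1 - γ) * ε) :
    ∀ u : ℕ → ℝ, (∀ τ, |u τ| ≤ R) → ∀ t : ℕ,
      |F u t -
        fhat (fun i : Fin (m + 1) => if m ≤ t + (i : ℕ) then u (t + (i : ℕ) - m) else 0)| < ε := by
  intro u hu t
  set x : Fin (m + 1) → ℝ :=
    fun i : Fin (m + 1) => if m ≤ t + (i : ℕ) then u (t + (i : ℕ) - m) else 0 with hxdef
  have hx : ∀ i, |x i| ≤ R := by
    intro i
    simp only [hxdef]
    split
    · exact hu _
    · simpa using hR.le
  have key : F (window t m u) t = tildeF F m x := by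
    unfold tildeF
    rcases le_or_gt m t with h | h
    · have heq : (fun τ => if t - m ≤ τ then
          (fun s => if hs : s < m + 1 then x ⟨s, hs⟩ else 0) (τ - (t - m)) else 0)
          = window t m u := by
        funext τ
        simp only [window, hxdef]
        by_cases h1 : t - m ≤ τ
        · by_cases h2 : τ ≤ t
          · have hlt : τ - (t - m) < m + 1 := by omega
            have hle : m ≤ t + (τ - (t - m)) := by omega
            have harg : t + (τ - (t - m)) - m = τ := by omega
            simp [h1, h2, hlt, hle, harg]
          · have hnlt : ¬(τ - (t - m) < m + 1) := by omega
            simp [h1, h2, hnlt]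
        · simp [h1, (by omega : ¬(t - m ≤ τ ∧ τ ≤ t))]
      have hti := hTI (t - m) (fun s => if hs : s < m + 1 then x ⟨s, hs⟩ else 0) t
      rw [heq] at hti
      rw [hti, if_pos (by omega : t - m ≤ t), Nat.sub_sub_self h]
    · have heq : (fun τ => if m - t ≤ τ then window t m u (τ - (m - t)) else 0)
          = (fun s => if hs : s < m + 1 then x ⟨s, hs⟩ else 0) := by
        funext τ
        simp only [window, hxdef]
        by_cases h1 : m - t ≤ τ
        · by_cases h2 : τ ≤ m
          · have hc : t - m ≤ τ - (m - t) ∧ τ - (m - t) ≤ t := by omega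
            have hlt : τ < m + 1 := by omega
            have hle : m ≤ t + τ := by omega
            have harg : τ - (m - t) = t + τ - m := by omega
            simp [h1, hc, hlt, hle, harg]
            exact fun h' => absurd h' (by omega)
          · have hnc : ¬(t - m ≤ τ - (m - t) ∧ τ - (m - t) ≤ t) := by omega
            have hnlt : ¬(τ < m + 1) := by omega
            simp [h1, hnc, hnlt]
            exact fun _ h' => absurd h' (by omega)
        · have hlt : τ < m + 1 := by omega
          have hnle : ¬(m ≤ t + τ) := by omega
          simp [h1, hlt, hnle]
      have hti := hTI (m - t) (window t m u) m
      rw [heq] at hti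
      rw [hti, if_pos (by omega : m - t ≤ m), (by omega : m - (m - t) = t)]
  have h1 := hm u hu t
  have h2 := hfhat x hx
  rw [← key] at h2
  calc |F u t - fhat x|
      ≤ |F u t - F (window t m u) t| + |F (window t m u) t - fhat x| :=
        abs_sub_le _ _ _
    _ < γ * ε + (1 - γ) * ε := add_lt_add_of_le_of_lt h1 h2
    _ = ε := by ring
end
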